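/- Let k ≥ 1, ℏ > 0, 0 ≤ l ≤ 1/12, let σ_1, …, σ_k ∈ {±1}, and let f ∈ C^k([0,l]). Assume f(0) ≥ ℏ/2 and f(l) ≥ ℏ/2; assume σ_j f^{(j)}(0) ≥ −2ℏ and σ_j f^{(j)}(l) ≥ −2ℏ for every 1 ≤ j ≤ k−1; and assume σ_k f^{(k)}(t) ≥ −3ℏ for all t ∈ [0,l]. Then f(t) ≥ ℏ/4 for all t ∈ [0,l]. -/

import Mathlib

open Set Topology

/-- If the derivative of `g` is bounded below by `-C` on `[0,l]`, then
`g t ≥ g 0 - C*l` on `[0,l]`. -/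
lemma aux_deriv_lb {l C : ℝ} (hl : 0 ≤ l) (hC : 0 ≤ C) {g : ℝ → ℝ}
    (hg : DifferentiableOn ℝ g (Icc 0 l))
    (hd : ∀ t ∈ Icc 0 l, -C ≤ derivWithin g (Icc 0 l) t) :
    ∀ t ∈ Icc 0 l, g 0 - C * l ≤ g t := by
  have hmono : MonotoneOn (fun t => g t + C * t) (Icc 0 l) := by
    apply monotoneOn_of_deriv_nonneg (convex_Icc 0 l)
    · exact hg.continuousOn.add (continuous_const.mul continuous_id).continuousOn
    · intro x hx
      rw [interior_Icc] at hx
      have hx' : Icc 0 l ∈ 𝓝 x := Icc_mem_nhds hx.1 hx.2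
      exact (((hg x (Ioo_subset_Icc_self hx)).differentiableAt hx').add
        ((differentiableAt_id.const_mul C))).differentiableWithinAt
    · intro x hx
      rw [interior_Icc] at hx
      have hx' : Icc 0 l ∈ 𝓝 x := Icc_mem_nhds hx.1 hx.2
      have hgx : DifferentiableAt ℝ g x := (hg x (Ioo_subset_Icc_self hx)).differentiableAt hx'
      have hda : HasDerivAt (fun t => g t + C * t) (deriv g x + C) x := by
        exact (hgx.hasDerivAt.add ((hasDerivAt_id x).const_mul C)).congr_deriv (by simp)
      rw [hda.deriv]
      have h1 := hd x (Ioo_subset_Icc_self hx)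
      rw [derivWithin_of_mem_nhds hx'] at h1
      linarith
  intro t ht
  have h1 := hmono (left_mem_Icc.2 hl) ht ht.1
  have h2 : C * t ≤ C * l := mul_le_mul_of_nonneg_left ht.2 hC
  simp only [mul_zero, add_zero] at h1
  linarith

/-- If the derivative of `g` is bounded above by `C` on `[0,l]`, then
`g t ≥ g l - C*l` on `[0,l]`. -/
lemma aux_deriv_ub {l C : ℝ} (hl : 0 ≤ l) (hC : 0 ≤ C) {g : ℝ → ℝ}
    (hg : DifferentiableOn ℝ g (Icc 0 l))
    (hd : ∀ t ∈ Icc 0 l, derivWithin g (Icc 0 l) t ≤ C) :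
    ∀ t ∈ Icc 0 l, g l - C * l ≤ g t := by
  have hanti : AntitoneOn (fun t => g t - C * t) (Icc 0 l) := by
    apply antitoneOn_of_deriv_nonpos (convex_Icc 0 l)
    · exact hg.continuousOn.sub (continuous_const.mul continuous_id).continuousOn
    · intro x hx
      rw [interior_Icc] at hx
      have hx' : Icc 0 l ∈ 𝓝 x := Icc_mem_nhds hx.1 hx.2
      exact (((hg x (Ioo_subset_Icc_self hx)).differentiableAt hx').sub
        ((differentiableAt_id.const_mul C))).differentiableWithinAt
    · intro x hx
      rw [interior_Icc] at hx
      have hx' : Icc 0 l ∈ 𝓝 x := Icc_mem_nhds hx.1 hx.2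
      have hgx : DifferentiableAt ℝ g x := (hg x (Ioo_subset_Icc_self hx)).differentiableAt hx'
      have hda : HasDerivAt (fun t => g t - C * t) (deriv g x - C) x := by
        exact (hgx.hasDerivAt.sub ((hasDerivAt_id x).const_mul C)).congr_deriv (by simp)
      rw [hda.deriv]
      have h1 := hd x (Ioo_subset_Icc_self hx)
      rw [derivWithin_of_mem_nhds hx'] at h1
      linarith
  intro t ht
  have h1 := hanti ht (right_mem_Icc.2 hl) ht.2
  have h2 : C * (l - t) ≤ C * l := by
    apply mul_le_mul_of_nonneg_left _ hC; linarith [ht.1]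
  simp only at h1
  nlinarith


/-- Lemma 2: if `f(0), f(l) ≥ ℏ/2`, the intermediate derivatives satisfy
`σ_j f^{(j)} ≥ -2ℏ` at the endpoints, and `σ_k f^{(k)} ≥ -3ℏ` on `[0,l]` with `l ≤ 1/12`,
then `f ≥ ℏ/4` on `[0,l]`. -/
theorem lower_bound_on_segment (k : ℕ) (hk : 1 ≤ k) (hbar l : ℝ) (hhbar : 0 < hbar)
    (hl0 : 0 ≤ l) (hl : l ≤ 1 / 12)
    (σ : ℕ → ℝ) (hσ : ∀ j, 1 ≤ j → j ≤ k → σ j = 1 ∨ σ j = -1)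
    (f : ℝ → ℝ) (hf : ContDiffOn ℝ k f (Icc 0 l))
    (h0 : hbar / 2 ≤ f 0) (hl' : hbar / 2 ≤ f l)
    (hj : ∀ j, 1 ≤ j → j ≤ k - 1 →
      -(2 * hbar) ≤ σ j * iteratedDerivWithin j f (Icc 0 l) 0 ∧
      -(2 * hbar) ≤ σ j * iteratedDerivWithin j f (Icc 0 l) l)
    (hk' : ∀ t ∈ Icc 0 l, -(3 * hbar) ≤ σ k * iteratedDerivWithin k f (Icc 0 l) t) :
    ∀ t ∈ Icc 0 l, hbar / 4 ≤ f t := by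
  rcases eq_or_lt_of_le hl0 with rfl | hlpos
  · intro t ht
    have : t = 0 := le_antisymm ht.2 ht.1
    subst this
    linarith
  have hD : UniqueDiffOn ℝ (Icc (0:ℝ) l) := uniqueDiffOn_Icc hlpos
  -- downward induction: σ_j f^{(j)} ≥ -3ℏ for all 1 ≤ j ≤ k
  have key : ∀ d j, j + d = k → 1 ≤ j →
      ∀ t ∈ Icc 0 l, -(3 * hbar) ≤ σ j * iteratedDerivWithin j f (Icc 0 l) t := by
    intro d
    induction d with
    | zero =>
      intro j hjk _
      simp only [Nat.add_zero] at hjk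
      subst hjk
      exact hk'
    | succ d ih =>
      intro j hjk hj1 t ht
      have hjk' : j + 1 ≤ k := by omega
      have ih' := ih (j + 1) (by omega) (by omega)
      obtain ⟨he0, hel⟩ := hj j hj1 (by omega)
      set g := iteratedDerivWithin j f (Icc 0 l) with hg_def
      have hgdiff : DifferentiableOn ℝ g (Icc 0 l) := by
        apply hf.differentiableOn_iteratedDerivWithin _ hD
        exact_mod_cast Nat.lt_of_lt_of_le (Nat.lt_succ_self j) hjk'
      set G := fun s => σ j * g s with hG_def
      have hGdiff : DifferentiableOn ℝ G (Icc 0 l) := hgdiff.const_mul (σ j)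
      have hGderiv : ∀ s ∈ Icc 0 l,
          derivWithin G (Icc 0 l) s = σ j * iteratedDerivWithin (j + 1) f (Icc 0 l) s := by
        intro s hs
        rw [hG_def, derivWithin_const_mul _ (hgdiff s hs),
          ← iteratedDerivWithin_succ]
      have hσj := hσ j hj1 (by omega)
      have hσj1 := hσ (j + 1) (by omega) hjk'
      have hσsq : σ j * σ j = 1 := by rcases hσj with h | h <;> rw [h] <;> norm_num
      -- the sign ε = σ j * σ (j+1)
      have hεcases : σ j * σ (j+1) = 1 ∨ σ j * σ (j+1) = -1 := by
        rcases hσj with h | h <;> rcases hσj1 with h' | h' <;> rw [h, h'] <;> norm_num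
      rcases hεcases with hε | hε
      · -- σ j * σ (j+1) = 1 : derivWithin G ≥ -3ℏ
        have hd : ∀ s ∈ Icc 0 l, -(3 * hbar) ≤ derivWithin G (Icc 0 l) s := by
          intro s hs
          rw [hGderiv s hs]
          have h1 := ih' s hs
          calc -(3 * hbar) ≤ σ (j+1) * iteratedDerivWithin (j+1) f (Icc 0 l) s := h1
            _ = (σ j * σ j) * (σ (j+1) * iteratedDerivWithin (j+1) f (Icc 0 l) s) := by
                rw [hσsq, one_mul]
            _ = (σ j * σ (j+1)) * (σ j * iteratedDerivWithin (j+1) f (Icc 0 l) s) := by ring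
            _ = σ j * iteratedDerivWithin (j+1) f (Icc 0 l) s := by rw [hε, one_mul]
        have h4 := aux_deriv_lb hl0 (by linarith) hGdiff hd t ht
        have hG0 : -(2 * hbar) ≤ G 0 := he0
        have h3 : G t = σ j * g t := rfl
        rw [← h3]
        have h5 : 3 * hbar * l ≤ 3 * hbar * (1 / 12) :=
          mul_le_mul_of_nonneg_left hl (by linarith)
        linarith
      · -- σ j * σ (j+1) = -1 : derivWithin G ≤ 3ℏ
        have hd : ∀ s ∈ Icc 0 l, derivWithin G (Icc 0 l) s ≤ 3 * hbar := by
          intro s hs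
          rw [hGderiv s hs]
          have h1 := ih' s hs
          have h2 : σ j * iteratedDerivWithin (j+1) f (Icc 0 l) s
              = -(σ (j+1) * iteratedDerivWithin (j+1) f (Icc 0 l) s) := by
            have : σ j = -σ (j+1) := by
              rcases hσj1 with h | h <;> rw [h] at hε ⊢ <;> nlinarith
            rw [this]; ring
          rw [h2]; linarith
        have h4 := aux_deriv_ub hl0 (by linarith) hGdiff hd t ht
        have hGl : -(2 * hbar) ≤ G l := hel
        have h3 : G t = σ j * g t := rfl
        rw [← h3]
        have h5 : 3 * hbar * l ≤ 3 * hbar * (1 / 12) :=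
          mul_le_mul_of_nonneg_left hl (by linarith)
        linarith
  -- now apply with j = 1
  have key1 := key (k - 1) 1 (by omega) le_rfl
  have hfdiff : DifferentiableOn ℝ f (Icc 0 l) := hf.differentiableOn (by exact_mod_cast (show k ≠ 0 by omega))
  have hd1 : ∀ s ∈ Icc 0 l, σ 1 * derivWithin f (Icc 0 l) s
      = σ 1 * iteratedDerivWithin 1 f (Icc 0 l) s := by
    intro s hs
    rw [iteratedDerivWithin_one]
  have hσ1 := hσ 1 le_rfl hk
  intro t ht
  rcases hσ1 with h | h
  · have hd : ∀ s ∈ Icc 0 l, -(3 * hbar) ≤ derivWithin f (Icc 0 l) s := by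
      intro s hs
      have := key1 s hs
      rw [← hd1 s hs, h, one_mul] at this
      exact this
    have h4 := aux_deriv_lb hl0 (by linarith) hfdiff hd t ht
    have h5 : 3 * hbar * l ≤ 3 * hbar * (1 / 12) :=
      mul_le_mul_of_nonneg_left hl (by linarith)
    linarith
  · have hd : ∀ s ∈ Icc 0 l, derivWithin f (Icc 0 l) s ≤ 3 * hbar := by
      intro s hs
      have := key1 s hs
      rw [← hd1 s hs, h] at this
      linarith
    have h4 := aux_deriv_ub hl0 (by linarith) hfdiff hd t ht
    have h5 : 3 * hbar * l ≤ 3 * hbar * (1 / 12) :=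
      mul_le_mul_of_nonneg_left hl (by linarith)
    linarith
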